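/- arXiv:1502.04052 — 5 statements merged into one kernel-verified Lean document; each statement's English description precedes it below -/
import Mathlib

section
/- Truthfulness of VCG in an assignment (matching) market: let m ≥ 1, j : Fin m, and let w, w' : Fin m → Fin m → ℝ be two weight matrices (w k g is buyer k's value for good g) with w k = w' k for every buyer k ≠ j (w j is buyer j's true values and w' j is an arbitrary misreport). Let σ be a permutation of Fin m maximizing ∑_{k} w k (σ k) over all permutations, let σ' be a permutation maximizing ∑_{k} w' k (σ' k) over all permutations, and let M := max over permutations τ of Fin m of ∑_{k ≠ j} w k (τ k). Define buyer j's VCG payments p := M − ∑_{k ≠ j} w k (σ k) and p' := M − ∑_{k ≠ j} w k (σ' k) (since w' k = w k for k ≠ j, the residual terms are the same under both reports). Then w j (σ j) − p ≥ w j (σ' j) − p': buyer j's utility for the good it is matched to, measured by its true values w j and net of its VCG payment, is at least as large under truthful reporting as under any deviation. -/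
open Finset

/-- Truthfulness of VCG in an assignment (matching) market: buyer `j`'s true-value
utility for the good it is matched to, net of its VCG payment, is at least as large
under truthful reporting (weights `w`, welfare-maximizing matching `σ`) as under any
deviation (weights `w'` agreeing with `w` off `j`, welfare-maximizing matching `σ'`),
where `M` is the maximal residual welfare of the other buyers over all matchings. -/
theorem vcg_matching_truthful {m : ℕ} (hm : 1 ≤ m) (j : Fin m)
    (w w' : Fin m → Fin m → ℝ) (hww' : ∀ k : Fin m, k ≠ j → w k = w' k)
    (σ σ' : Equiv.Perm (Fin m))
    (hσ : ∀ τ : Equiv.Perm (Fin m), ∑ k, w k (τ k) ≤ ∑ k, w k (σ k))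
    (hσ' : ∀ τ : Equiv.Perm (Fin m), ∑ k, w' k (τ k) ≤ ∑ k, w' k (σ' k))
    (M : ℝ)
    (hM : IsGreatest
      {x : ℝ | ∃ τ : Equiv.Perm (Fin m), x = ∑ k ∈ univ.erase j, w k (τ k)} M) :
    w j (σ j) - (M - ∑ k ∈ univ.erase j, w k (σ k)) ≥
      w j (σ' j) - (M - ∑ k ∈ univ.erase j, w k (σ' k)) := by
  have h := hσ σ'
  rw [← Finset.add_sum_erase univ (fun k => w k (σ k)) (mem_univ j),
      ← Finset.add_sum_erase univ (fun k => w k (σ' k)) (mem_univ j)] at h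
  linarith
end

section
/- Deferred-decision / exchangeability step in the distribution-preservation lemma: let T be a measurable space, μ a probability measure on T, and k a natural number. Then the pushforward of the product probability measure μ ⊗ μ^k ⊗ uniform(Fin (k+1)) under the map (t, r', i) ↦ (i.insertNth t r', i) is equal to the product measure μ^{k+1} ⊗ uniform(Fin (k+1)). In words: inserting a fresh μ-distributed sample at a uniformly random slot of k i.i.d. μ-samples yields a profile of k+1 i.i.d. μ-samples, and this profile is independent of the chosen slot. -/
open MeasureTheory
open scoped ENNReal

lemma prod_smul_right_aux {α β : Type*} [MeasurableSpace α] [MeasurableSpace β]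
    (μ : Measure α) (ν : Measure β) [SFinite ν] (c : ℝ≥0∞) (hc : c ≠ ⊤) :
    μ.prod (c • ν) = c • μ.prod ν := by
  ext s hs
  rw [Measure.smul_apply, Measure.prod_apply hs, Measure.prod_apply hs]
  simp only [Measure.smul_apply, smul_eq_mul]
  rw [lintegral_const_mul' _ _ hc]

/-- Deferred-decision / exchangeability step: inserting a fresh `μ`-distributed sample
at a uniformly random slot of `k` i.i.d. `μ`-samples yields a profile of `k+1` i.i.d.
`μ`-samples, independent of the chosen slot. -/
theorem insertNth_uniform_map_eq {T : Type*} [MeasurableSpace T]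
    (μ : Measure T) [IsProbabilityMeasure μ] (k : ℕ) :
    Measure.map
      (fun p : T × (Fin k → T) × Fin (k + 1) => (p.2.2.insertNth p.1 p.2.1, p.2.2))
      (μ.prod ((Measure.pi fun _ : Fin k => μ).prod
        (PMF.uniformOfFintype (Fin (k + 1))).toMeasure)) =
    (Measure.pi fun _ : Fin (k + 1) => μ).prod
      (PMF.uniformOfFintype (Fin (k + 1))).toMeasure := by
  set ν : Measure (Fin k → T) := Measure.pi fun _ : Fin k => μ
  set π : Measure (Fin (k + 1) → T) := Measure.pi fun _ : Fin (k + 1) => μ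
  set u : Measure (Fin (k + 1)) := (PMF.uniformOfFintype (Fin (k + 1))).toMeasure
  -- measurability of the per-slot insertion
  have he : ∀ i : Fin (k + 1),
      ⇑(MeasurableEquiv.piFinSuccAbove (fun _ : Fin (k + 1) => T) i).symm =
        (fun a : T × (Fin k → T) => Fin.insertNth (α := fun _ => T) i a.1 a.2) := by
    intro i
    funext a
    show (Fin.insertNthEquiv (fun _ : Fin (k + 1) => T) i) ((Equiv.prodCongr (Equiv.refl _) (Equiv.refl _)) a) = _
    rfl
  have hins : ∀ i : Fin (k + 1),
      Measurable (fun a : T × (Fin k → T) => Fin.insertNth (α := fun _ => T) i a.1 a.2) := fun i =>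
    (he i) ▸ (MeasurableEquiv.piFinSuccAbove (fun _ : Fin (k + 1) => T) i).symm.measurable
  have hinsmap : ∀ i : Fin (k + 1),
      Measure.map (fun a : T × (Fin k → T) => Fin.insertNth (α := fun _ => T) i a.1 a.2) (μ.prod ν) = π := by
    intro i
    have h := (measurePreserving_piFinSuccAbove (fun _ : Fin (k + 1) => μ) i).symm
    have := h.map_eq
    rwa [he i] at this
  -- the function on the reassociated space
  set H : (T × (Fin k → T)) × Fin (k + 1) → (Fin (k + 1) → T) × Fin (k + 1) :=
    fun q => (Fin.insertNth (α := fun _ => T) q.2 q.1.1 q.1.2, q.2)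
  have hH : Measurable H := by
    apply measurable_from_prod_countable_left
    intro i
    exact ((hins i).comp measurable_id).prodMk measurable_const
  have hF : (fun p : T × (Fin k → T) × Fin (k + 1) =>
      (p.2.2.insertNth p.1 p.2.1, p.2.2)) = H ∘ (MeasurableEquiv.prodAssoc : (T × (Fin k → T)) × Fin (k + 1) ≃ᵐ T × (Fin k → T) × Fin (k + 1)).symm := by
    ext p <;> rfl
  rw [hF, ← Measure.map_map hH (MeasurableEquiv.prodAssoc.symm.measurable), ← Measure.prodAssoc_prod,
    MeasurableEquiv.map_symm_map]
  -- decompose u as a sum of weighted diracs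
  have hut : ∀ i : Fin (k + 1), u {i} ≠ ⊤ := fun i => (measure_ne_top u _)
  have hu : u = Measure.sum fun i => u {i} • Measure.dirac i :=
    (Measure.sum_smul_dirac u).symm
  calc Measure.map H ((μ.prod ν).prod u)
      = Measure.map H (Measure.sum fun i => u {i} • (μ.prod ν).prod (Measure.dirac i)) := by
        conv_lhs => rw [hu]
        rw [Measure.prod_sum_right]
        have : (fun i : Fin (k + 1) => (μ.prod ν).prod (u {i} • Measure.dirac i)) =
            fun i => u {i} • (μ.prod ν).prod (Measure.dirac i) :=
          funext fun i => prod_smul_right_aux _ _ _ (hut i)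
        rw [this]
    _ = Measure.sum fun i => u {i} • Measure.map H ((μ.prod ν).prod (Measure.dirac i)) := by
        rw [Measure.map_sum hH.aemeasurable]
        have : (fun i : Fin (k + 1) => Measure.map H (u {i} • (μ.prod ν).prod (Measure.dirac i))) =
            fun i => u {i} • Measure.map H ((μ.prod ν).prod (Measure.dirac i)) :=
          funext fun i => Measure.map_smul _ _ _
        rw [this]
    _ = Measure.sum fun i => u {i} • π.prod (Measure.dirac i) := by
        congr 1
        funext i
        congr 1
        rw [Measure.prod_dirac, Measure.map_map hH (measurable_prodMk_right),
          Measure.prod_dirac]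
        have : H ∘ (fun x : T × (Fin k → T) => (x, i)) =
            (fun y : Fin (k + 1) → T => (y, i)) ∘ (fun a : T × (Fin k → T) => Fin.insertNth (α := fun _ => T) i a.1 a.2) := rfl
        rw [this, ← Measure.map_map measurable_prodMk_right (hins i), hinsmap i]
    _ = π.prod u := by
        conv_rhs => rw [hu]
        rw [Measure.prod_sum_right]
        have : (fun i : Fin (k + 1) => π.prod (u {i} • Measure.dirac i)) =
            fun i => u {i} • π.prod (Measure.dirac i) :=
          funext fun i => prod_smul_right_aux _ _ _ (hut i)
        rw [this]
end

section
/- Uniform index through a data-dependent perfect matching: let T be a measurable space, μ a probability measure on T, m ≥ 1, and let (X, ν) be any measurable space equipped with a probability measure (auxiliary independent randomness, e.g. the replica profile). Let G : X → (Fin m → T) → (Fin m → Fin m) be any rule such that G x s is a bijection of Fin m for all x and s, and such that (x, s, a) ↦ G x s a is measurable. Then the pushforward of the product probability measure ν ⊗ μ^m ⊗ uniform(Fin m) under the map (x, s, i) ↦ s (G x s i) is equal to μ. In words: if s consists of m i.i.d. μ-samples and i is an independent uniformly random index, then the entry of s selected by applying any (data-dependent) perfect matching to i is an unbiased sample from μ.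 -/
open MeasureTheory

/-- Uniform index through a data-dependent perfect matching: if `s` consists of `m`
i.i.d. `μ`-samples and `i` is an independent uniformly random index (with auxiliary
independent randomness `x ~ ν`), then the entry of `s` selected by applying any
measurable data-dependent perfect matching `G x s` to `i` is an unbiased sample
from `μ`. -/
theorem uniform_through_matching {T X : Type*} [MeasurableSpace T] [MeasurableSpace X]
    (μ : Measure T) [IsProbabilityMeasure μ]
    (ν : Measure X) [IsProbabilityMeasure ν]
    (m : ℕ) [NeZero m]
    (G : X → (Fin m → T) → (Fin m → Fin m))
    (hGbij : ∀ (x : X) (s : Fin m → T), Function.Bijective (G x s))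
    (hGmeas : Measurable
      (fun q : (X × (Fin m → T)) × Fin m => G q.1.1 q.1.2 q.2)) :
    Measure.map
      (fun p : X × (Fin m → T) × Fin m => p.2.1 (G p.1 p.2.1 p.2.2))
      (ν.prod ((Measure.pi fun _ : Fin m => μ).prod
        (PMF.uniformOfFintype (Fin m)).toMeasure)) = μ := by
  classical
  set u := (PMF.uniformOfFintype (Fin m)).toMeasure with hu
  -- measurability of the full map
  have heval : Measurable (fun q : (Fin m → T) × Fin m => q.1 q.2) :=
    measurable_from_prod_countable_left fun j => measurable_pi_apply j
  have hG' : Measurable (fun p : X × (Fin m → T) × Fin m => G p.1 p.2.1 p.2.2) := by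
    have : Measurable (fun p : X × (Fin m → T) × Fin m => ((p.1, p.2.1), p.2.2)) := by
      fun_prop
    exact hGmeas.comp this
  have hmap : Measurable (fun p : X × (Fin m → T) × Fin m => p.2.1 (G p.1 p.2.1 p.2.2)) :=
    heval.comp (measurable_snd.fst.prodMk hG')
  -- the key computation of the uniform measure of a preimage set
  have hcard : ∀ (x : X) (s : Fin m → T) (A : Set T),
      u {i : Fin m | s (G x s i) ∈ A} = ∑ j : Fin m, if s j ∈ A then ((m : ENNReal))⁻¹ else 0 := by
    intro x s A
    rw [hu, PMF.toMeasure_apply_fintype]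
    have := Fintype.sum_bijective (G x s) (hGbij x s)
      (fun i => Set.indicator {i : Fin m | s (G x s i) ∈ A} (PMF.uniformOfFintype (Fin m)) i)
      (fun j => if s j ∈ A then ((m : ENNReal))⁻¹ else 0) ?_
    · exact this
    · intro i
      by_cases h : s (G x s i) ∈ A <;>
        simp [Set.indicator, h, PMF.uniformOfFintype_apply]
  ext A hA
  rw [Measure.map_apply hmap hA, Measure.prod_apply (hmap hA)]
  have h1 : ∀ x : X,
      ((Measure.pi fun _ : Fin m => μ).prod u)
        (Prod.mk x ⁻¹' ((fun p : X × (Fin m → T) × Fin m =>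
          p.2.1 (G p.1 p.2.1 p.2.2)) ⁻¹' A)) = μ A := by
    intro x
    rw [Measure.prod_apply (measurable_prodMk_left (hmap hA))]
    have h2 : ∀ s : Fin m → T,
        u (Prod.mk s ⁻¹' (Prod.mk x ⁻¹' ((fun p : X × (Fin m → T) × Fin m =>
            p.2.1 (G p.1 p.2.1 p.2.2)) ⁻¹' A)))
          = ∑ j : Fin m, Set.indicator (Function.eval j ⁻¹' A)
              (fun _ => ((m : ENNReal))⁻¹) s := by
      intro s
      have : (Prod.mk s ⁻¹' (Prod.mk x ⁻¹' ((fun p : X × (Fin m → T) × Fin m =>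
          p.2.1 (G p.1 p.2.1 p.2.2)) ⁻¹' A))) = {i : Fin m | s (G x s i) ∈ A} := rfl
      rw [this, hcard x s A]
      refine Finset.sum_congr rfl fun j _ => ?_
      by_cases h : s j ∈ A <;> simp [Set.indicator, h, Function.eval]
    rw [lintegral_congr h2, lintegral_finset_sum]
    · have h3 : ∀ j : Fin m,
          ∫⁻ s, Set.indicator (Function.eval j ⁻¹' A)
            (fun _ => ((m : ENNReal))⁻¹) s ∂(Measure.pi fun _ : Fin m => μ)
            = ((m : ENNReal))⁻¹ * μ A := by
        intro j
        rw [lintegral_indicator ((measurable_pi_apply j) hA)]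
        rw [setLIntegral_const]
        congr 1
        rw [Set.eval_preimage]
        rw [Measure.pi_pi]
        rw [Fintype.prod_eq_single j]
        · simp
        · intro k hk
          simp [Function.update_apply, hk]
      rw [Finset.sum_congr rfl fun j _ => h3 j]
      simp only [Finset.sum_const, Finset.card_univ, Fintype.card_fin, nsmul_eq_mul]
      rw [← mul_assoc, ENNReal.mul_inv_cancel (by exact_mod_cast (NeZero.ne m)) (by simp),
        one_mul]
    · intro j _
      exact measurable_const.indicator ((measurable_pi_apply j) hA)
  rw [lintegral_congr h1, lintegral_const, measure_univ, mul_one]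
end

section
/- Truthfulness of the Replica-Surrogate-Matching procedure for a single agent facing i.i.d. opponents: let T and O be measurable spaces, μ a probability measure on T, n = (n−1) + 1 ≥ 1 the number of agents, j : Fin n, and m = k + 1 ≥ 1 the number of replicas. Let A : (Fin n → T) → O be measurable and let v : T → O → ℝ be jointly measurable with |v t o| ≤ C for some constant C. Let (σ, p) be a VCG matching selector for the expected weight function w_j on markets of size m. For true type t and report b, define the expected utility U(t, b) := ∫ over (r', s, i) ~ μ^{m−1} ⊗ μ^m ⊗ uniform(Fin m) of [ (∫ over x ~ μ^{n−1} of v(t, A(j.insertNth (s (σ(R, s) i)) x))) − p(R, s) i ], where R := i.insertNth b r' is the replica profile with the report inserted at slot i. Then for all t, b : T, U(t, t) ≥ U(t, b): when the other n−1 inputs to the algorithm A are i.i.d. μ-samples independent of agent j's coins, truthfully reporting one's type to the Replica-Surrogate-Matching procedure maximizes expected utility. -/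
open MeasureTheory Finset

/-- Evaluating a measurable family of functions at a measurable countable index
is measurable. -/
lemma measurable_eval_comp {α T : Type*} {ι : Type*} [MeasurableSpace α]
    [MeasurableSpace T] [Countable ι] [MeasurableSpace ι] [MeasurableSingletonClass ι]
    {h : α → ι → T} {g : α → ι} (hh : Measurable h) (hg : Measurable g) :
    Measurable fun a => h a (g a) := by
  have hev : Measurable fun q : (ι → T) × ι => q.1 q.2 :=
    measurable_from_prod_countable_left fun i => measurable_pi_apply i
  exact hev.comp (hh.prodMk hg)

/-- `Fin.insertNth` with varying index, value and tuple is measurable. -/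
lemma measurable_insertNth_varying {α T : Type*} {m : ℕ} [MeasurableSpace α]
    [MeasurableSpace T] {g : α → Fin (m + 1)} {u : α → T} {h : α → Fin m → T}
    (hg : Measurable g) (hu : Measurable u) (hh : Measurable h) :
    Measurable fun a => ((g a).insertNth (u a) (h a) : Fin (m + 1) → T) := by
  have : Measurable fun q : (T × (Fin m → T)) × Fin (m + 1) =>
      (q.2.insertNth q.1.1 q.1.2 : Fin (m + 1) → T) := by
    apply measurable_from_prod_countable_left
    intro i
    exact (MeasurableEquiv.piFinSuccAbove (fun _ => T) i).symm.measurable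
  exact this.comp ((hu.prodMk hh).prodMk hg)

/-- Truthfulness of the Replica-Surrogate-Matching procedure for a single agent `j`
facing i.i.d. opponents: with `n = nm1 + 1` agents, `m = k + 1` replicas, a measurable
algorithm `A`, a bounded jointly measurable valuation `v`, the expected weight
function `W r s = 𝔼_{x ~ μ^{n-1}} v r (A (j.insertNth s x))`, and `(σ, p)` a VCG
matching selector for `W` on markets of size `m` (welfare-maximizing matching with
externality payments, jointly measurable), the agent's expected utility
`U t b = 𝔼_{(r',s,i)} [ 𝔼_{x ~ μ^{n-1}} v t (A (j.insertNth (matched surrogate) x))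
− payment ]` satisfies `U t t ≥ U t b` for every true type `t` and report `b`. -/
theorem rsm_single_agent_truthful
    {T O : Type*} [MeasurableSpace T] [MeasurableSpace O]
    (μ : Measure T) [IsProbabilityMeasure μ]
    (nm1 : ℕ) (j : Fin (nm1 + 1)) (k : ℕ)
    (A : (Fin (nm1 + 1) → T) → O) (hA : Measurable A)
    (v : T → O → ℝ) (hv : Measurable fun q : T × O => v q.1 q.2)
    (C : ℝ) (hC : ∀ (t : T) (o : O), |v t o| ≤ C)
    (W : T → T → ℝ)
    (hW : ∀ r s : T,
      W r s = ∫ x, v r (A (j.insertNth s x)) ∂(Measure.pi fun _ : Fin nm1 => μ))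
    (σ : (Fin (k + 1) → T) → (Fin (k + 1) → T) → Equiv.Perm (Fin (k + 1)))
    (p : (Fin (k + 1) → T) → (Fin (k + 1) → T) → Fin (k + 1) → ℝ)
    (hσmeas : Measurable
      (fun q : ((Fin (k + 1) → T) × (Fin (k + 1) → T)) × Fin (k + 1) =>
        σ q.1.1 q.1.2 q.2))
    (hpmeas : Measurable
      (fun q : ((Fin (k + 1) → T) × (Fin (k + 1) → T)) × Fin (k + 1) =>
        p q.1.1 q.1.2 q.2))
    (hσopt : ∀ (r s : Fin (k + 1) → T) (τ : Equiv.Perm (Fin (k + 1))),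
      ∑ a, W (r a) (s (τ a)) ≤ ∑ a, W (r a) (s (σ r s a)))
    (hpay : ∀ (r s : Fin (k + 1) → T) (a : Fin (k + 1)),
      p r s a =
        (⨆ τ : Equiv.Perm (Fin (k + 1)), ∑ a' ∈ univ.erase a, W (r a') (s (τ a')))
          - ∑ a' ∈ univ.erase a, W (r a') (s (σ r s a'))) :
    ∀ t b : T,
      (∫ c : (Fin k → T) × (Fin (k + 1) → T) × Fin (k + 1),
          ((∫ x, v t (A (j.insertNth
              (c.2.1 (σ (c.2.2.insertNth t c.1) c.2.1 c.2.2)) x))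
            ∂(Measure.pi fun _ : Fin nm1 => μ))
            - p (c.2.2.insertNth t c.1) c.2.1 c.2.2)
        ∂((Measure.pi fun _ : Fin k => μ).prod
          ((Measure.pi fun _ : Fin (k + 1) => μ).prod
            (PMF.uniformOfFintype (Fin (k + 1))).toMeasure)))
      ≥
      (∫ c : (Fin k → T) × (Fin (k + 1) → T) × Fin (k + 1),
          ((∫ x, v t (A (j.insertNth
              (c.2.1 (σ (c.2.2.insertNth b c.1) c.2.1 c.2.2)) x))
            ∂(Measure.pi fun _ : Fin nm1 => μ))
            - p (c.2.2.insertNth b c.1) c.2.1 c.2.2)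
        ∂((Measure.pi fun _ : Fin k => μ).prod
          ((Measure.pi fun _ : Fin (k + 1) => μ).prod
            (PMF.uniformOfFintype (Fin (k + 1))).toMeasure))) := by
  intro t b
  -- basic facts
  have hTne : Nonempty T := by
    by_contra h
    rw [not_nonempty_iff] at h
    have h1 : μ Set.univ = 1 := measure_univ
    rw [Set.univ_eq_empty_iff.mpr h, measure_empty] at h1
    exact zero_ne_one h1
  obtain ⟨t0⟩ := hTne
  have hC0 : 0 ≤ C := le_trans (abs_nonneg _) (hC t0 (A fun _ => t0))
  have habs : ∀ x y : ℝ, |x - y| ≤ |x| + |y| := fun x y => by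
    rw [sub_eq_add_neg]
    exact (abs_add_le x (-y)).trans (le_of_eq (by rw [abs_neg]))
  -- boundedness of W
  have hWbound : ∀ r s : T, |W r s| ≤ C := by
    intro r s
    rw [hW]
    have := norm_integral_le_of_norm_le_const
      (μ := Measure.pi fun _ : Fin nm1 => μ)
      (f := fun x => v r (A (j.insertNth s x))) (C := C)
      (Filter.Eventually.of_forall fun x => by
        simpa [Real.norm_eq_abs] using hC r (A (j.insertNth s x)))
    simpa [Real.norm_eq_abs] using this
  -- boundedness of sums over erased sets
  have hsumb : ∀ (r s : Fin (k + 1) → T) (a : Fin (k + 1))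
      (τ : Equiv.Perm (Fin (k + 1))),
      |∑ a' ∈ univ.erase a, W (r a') (s (τ a'))| ≤ k * C := by
    intro r s a τ
    calc |∑ a' ∈ univ.erase a, W (r a') (s (τ a'))|
        ≤ ∑ a' ∈ univ.erase a, |W (r a') (s (τ a'))| := Finset.abs_sum_le_sum_abs _ _
      _ ≤ ∑ _a' ∈ univ.erase a, C := Finset.sum_le_sum fun a' _ => hWbound _ _
      _ = k * C := by
          rw [Finset.sum_const, Finset.card_erase_of_mem (mem_univ a)]
          simp [nsmul_eq_mul]
  -- boundedness of the payment
  have hpbound : ∀ (r s : Fin (k + 1) → T) (a : Fin (k + 1)),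
      |p r s a| ≤ k * C + k * C := by
    intro r s a
    rw [hpay]
    refine (habs _ _).trans (add_le_add ?_ (hsumb r s a _))
    rw [abs_le]
    constructor
    · have hbdd : BddAbove (Set.range fun τ : Equiv.Perm (Fin (k + 1)) =>
          ∑ a' ∈ univ.erase a, W (r a') (s (τ a'))) :=
        Set.Finite.bddAbove (Set.finite_range _)
      exact le_trans (neg_le_of_abs_le (hsumb r s a 1)) (le_ciSup hbdd 1)
    · exact ciSup_le fun τ => le_of_abs_le (hsumb r s a τ)
  -- measurability of W
  have hWm : Measurable fun q : T × T => W q.1 q.2 := by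
    have heq : (fun q : T × T => W q.1 q.2) =
        fun q : T × T => ∫ x, v q.1 (A (j.insertNth q.2 x))
          ∂(Measure.pi fun _ : Fin nm1 => μ) := funext fun q => hW q.1 q.2
    rw [heq]
    apply StronglyMeasurable.measurable
    apply MeasureTheory.StronglyMeasurable.integral_prod_right'
      (f := fun z : (T × T) × (Fin nm1 → T) => v z.1.1 (A (j.insertNth z.1.2 z.2)))
    apply Measurable.stronglyMeasurable
    exact hv.comp ((measurable_fst.comp measurable_fst).prodMk
      (hA.comp (measurable_insertNth_varying measurable_const
        (measurable_snd.comp measurable_fst) measurable_snd)))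
  -- the "utility when reporting d" integrand
  set ν : Measure ((Fin k → T) × (Fin (k + 1) → T) × Fin (k + 1)) :=
    ((Measure.pi fun _ : Fin k => μ).prod
      ((Measure.pi fun _ : Fin (k + 1) => μ).prod
        (PMF.uniformOfFintype (Fin (k + 1))).toMeasure)) with hν
  have hint : ∀ d : T,
      Integrable (fun c : (Fin k → T) × (Fin (k + 1) → T) × Fin (k + 1) =>
        W t (c.2.1 (σ (c.2.2.insertNth d c.1) c.2.1 c.2.2))
          - p (c.2.2.insertNth d c.1) c.2.1 c.2.2) ν := by
    intro d
    have hR : Measurable fun c : (Fin k → T) × (Fin (k + 1) → T) × Fin (k + 1) =>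
        (c.2.2.insertNth d c.1 : Fin (k + 1) → T) :=
      measurable_insertNth_varying measurable_snd.snd measurable_const measurable_fst
    have hidx : Measurable fun c : (Fin k → T) × (Fin (k + 1) → T) × Fin (k + 1) =>
        σ (c.2.2.insertNth d c.1) c.2.1 c.2.2 :=
      hσmeas.comp ((hR.prodMk measurable_snd.fst).prodMk measurable_snd.snd)
    have hsur : Measurable fun c : (Fin k → T) × (Fin (k + 1) → T) × Fin (k + 1) =>
        c.2.1 (σ (c.2.2.insertNth d c.1) c.2.1 c.2.2) :=
      measurable_eval_comp measurable_snd.fst hidx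
    have hterm1 : Measurable fun c : (Fin k → T) × (Fin (k + 1) → T) × Fin (k + 1) =>
        W t (c.2.1 (σ (c.2.2.insertNth d c.1) c.2.1 c.2.2)) :=
      hWm.comp (measurable_const.prodMk hsur)
    have hterm2 : Measurable fun c : (Fin k → T) × (Fin (k + 1) → T) × Fin (k + 1) =>
        p (c.2.2.insertNth d c.1) c.2.1 c.2.2 :=
      hpmeas.comp ((hR.prodMk measurable_snd.fst).prodMk measurable_snd.snd)
    refine ⟨(hterm1.sub hterm2).aestronglyMeasurable, ?_⟩
    apply HasFiniteIntegral.of_bounded (C := C + (k * C + k * C))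
    filter_upwards with c
    calc ‖W t (c.2.1 (σ (c.2.2.insertNth d c.1) c.2.1 c.2.2))
          - p (c.2.2.insertNth d c.1) c.2.1 c.2.2‖
        ≤ |W t (c.2.1 (σ (c.2.2.insertNth d c.1) c.2.1 c.2.2))|
          + |p (c.2.2.insertNth d c.1) c.2.1 c.2.2| := habs _ _
      _ ≤ C + (k * C + k * C) := add_le_add (hWbound _ _) (hpbound _ _ _)
  -- pointwise inequality (the VCG argument)
  have hpt : ∀ c : (Fin k → T) × (Fin (k + 1) → T) × Fin (k + 1),
      W t (c.2.1 (σ (c.2.2.insertNth b c.1) c.2.1 c.2.2))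
        - p (c.2.2.insertNth b c.1) c.2.1 c.2.2
      ≤ W t (c.2.1 (σ (c.2.2.insertNth t c.1) c.2.1 c.2.2))
        - p (c.2.2.insertNth t c.1) c.2.1 c.2.2 := by
    rintro ⟨r', s, i⟩
    simp only
    set Rt : Fin (k + 1) → T := i.insertNth t r' with hRt
    set Rb : Fin (k + 1) → T := i.insertNth b r' with hRb
    have hRti : Rt i = t := by rw [hRt]; simp
    have hoff : ∀ a : Fin (k + 1), a ≠ i → Rb a = Rt a := by
      intro a ha
      obtain ⟨l, rfl⟩ := Fin.exists_succAbove_eq ha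
      rw [hRt, hRb, Fin.insertNth_apply_succAbove, Fin.insertNth_apply_succAbove]
    have hsum_eq : ∀ g : Fin (k + 1) → Fin (k + 1),
        ∑ a ∈ univ.erase i, W (Rb a) (s (g a))
          = ∑ a ∈ univ.erase i, W (Rt a) (s (g a)) := fun g =>
      Finset.sum_congr rfl fun a ha => by rw [hoff a (Finset.ne_of_mem_erase ha)]
    have hkey : ∀ τ : Equiv.Perm (Fin (k + 1)),
        W t (s (τ i)) + ∑ a ∈ univ.erase i, W (Rt a) (s (τ a))
          = ∑ a, W (Rt a) (s (τ a)) := by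
      intro τ
      rw [← hRti]
      exact Finset.add_sum_erase _ (fun a => W (Rt a) (s (τ a))) (mem_univ i)
    rw [hpay Rb s i, hpay Rt s i, hsum_eq (σ Rb s)]
    have hSup_eq : (⨆ τ : Equiv.Perm (Fin (k + 1)),
        ∑ a' ∈ univ.erase i, W (Rb a') (s (τ a')))
          = ⨆ τ : Equiv.Perm (Fin (k + 1)),
        ∑ a' ∈ univ.erase i, W (Rt a') (s (τ a')) :=
      iSup_congr fun τ => hsum_eq τ
    rw [hSup_eq]
    have hmain : W t (s (σ Rb s i)) + ∑ a ∈ univ.erase i, W (Rt a) (s (σ Rb s a))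
        ≤ W t (s (σ Rt s i)) + ∑ a ∈ univ.erase i, W (Rt a) (s (σ Rt s a)) := by
      rw [hkey (σ Rb s), hkey (σ Rt s)]
      exact hσopt Rt s (σ Rb s)
    linarith
  -- conclude
  rw [ge_iff_le]
  simp only [← hW]
  exact integral_mono (hint b) (hint t) hpt
end

section
/- The Replica-Surrogate-Matching mechanism is Bayesian incentive compatible (Theorem of Hartline–Kleinberg–Malekian, idealized model): let T and O be measurable spaces, μ a probability measure on T, n = (n−1) + 1 ≥ 1 the number of agents, j : Fin n, and m = k + 1 ≥ 1 the number of replicas. Let A : (Fin n → T) → O be measurable and let v : T → O → ℝ be jointly measurable with |v t o| ≤ C for some constant C. For each agent ℓ : Fin n, let (σ_ℓ, p_ℓ) be a VCG matching selector for the expected weight function w_ℓ on markets of size m. For an agent with input type b and coins c = (r', s, i) ∈ (Fin (m−1) → T) × (Fin m → T) × Fin m, define the surrogate Sur_ℓ(b; c) := s (σ_ℓ(i.insertNth b r', s) i) and the payment Pay_ℓ(b; c) := p_ℓ(i.insertNth b r', s) i. For true type t and report b of agent j, define the expected utility U(t, b) := ∫ over t_{−j} ~ μ^{n−1} and over independent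 coins c_ℓ ~ μ^{m−1} ⊗ μ^m ⊗ uniform(Fin m), one for each agent ℓ : Fin n, of [ v(t, A(z)) − Pay_j(b; c_j) ], where the surrogate profile z : Fin n → T has z j = Sur_j(b; c_j) and, for each ℓ ≠ j with true type given by the corresponding coordinate of t_{−j}, z ℓ = Sur_ℓ(t_ℓ; c_ℓ). Then for all t, b : T, U(t, t) ≥ U(t, b): when all other agents report truthfully with types drawn i.i.d. from the prior μ, agent j's expected utility in the composed mechanism (each agent's type transformed into a surrogate by the Replica-Surrogate-Matching procedure, the algorithm A applied to the surrogate profile, and agent j charged its VCG payment) is maximized by truthful reporting. -/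
open MeasureTheory Finset

/-- The coins of the Replica-Surrogate-Matching procedure with `k+1` replicas:
`k` fresh replica samples and `k+1` surrogate samples, all i.i.d. from the prior `μ`,
together with a uniformly random slot. -/
noncomputable def rsmCoins {T : Type*} [MeasurableSpace T] (μ : Measure T) (k : ℕ) :
    Measure ((Fin k → T) × (Fin (k + 1) → T) × Fin (k + 1)) :=
  (Measure.pi fun _ : Fin k => μ).prod
    ((Measure.pi fun _ : Fin (k + 1) => μ).prod
      (PMF.uniformOfFintype (Fin (k + 1))).toMeasure)

/-- The surrogate output by the Replica-Surrogate-Matching procedure on report `b`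
with coins `c = (r', s, i)`: insert `b` at slot `i` of the replicas `r'`, run the
matching `σ`, and return the surrogate matched to slot `i`. -/
def rsmSurrogate {T : Type*} (k : ℕ)
    (σ : (Fin (k + 1) → T) → (Fin (k + 1) → T) → Equiv.Perm (Fin (k + 1)))
    (b : T) (c : (Fin k → T) × (Fin (k + 1) → T) × Fin (k + 1)) : T :=
  c.2.1 (σ (c.2.2.insertNth b c.1) c.2.1 c.2.2)

/-- The payment charged by the Replica-Surrogate-Matching procedure on report `b`
with coins `c = (r', s, i)`: the payment of the buyer in slot `i` in the VCG
matching market with buyers `i.insertNth b r'` and goods `s`. -/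
def rsmPayment {T : Type*} (k : ℕ)
    (p : (Fin (k + 1) → T) → (Fin (k + 1) → T) → Fin (k + 1) → ℝ)
    (b : T) (c : (Fin k → T) × (Fin (k + 1) → T) × Fin (k + 1)) : ℝ :=
  p (c.2.2.insertNth b c.1) c.2.1 c.2.2

open scoped ENNReal

section RSMAux
variable {T : Type*} [MeasurableSpace T]

lemma rsm_meas_eval {m : ℕ} : Measurable fun q : (Fin m → T) × Fin m => q.1 q.2 :=
  measurable_from_prod_countable_left fun i => measurable_pi_apply i

lemma rsm_meas_insertNth_fixed {α : Type*} [MeasurableSpace α] {n : ℕ} (i : Fin (n + 1)) :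
    Measurable fun x : α × (Fin n → α) => (i.insertNth x.1 x.2 : Fin (n+1) → α) :=
  (MeasurableEquiv.piFinSuccAbove (fun _ : Fin (n + 1) => α) i).symm.measurable

lemma rsm_meas_insertNth {α : Type*} [MeasurableSpace α] {n : ℕ} :
    Measurable fun q : (α × (Fin n → α)) × Fin (n + 1) => (q.2.insertNth q.1.1 q.1.2 : Fin (n+1) → α) :=
  measurable_from_prod_countable_left fun i => rsm_meas_insertNth_fixed i

lemma rsm_meas_sur {k : ℕ}
    (σℓ : (Fin (k + 1) → T) → (Fin (k + 1) → T) → Equiv.Perm (Fin (k + 1)))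
    (hσ : Measurable fun q : ((Fin (k + 1) → T) × (Fin (k + 1) → T)) × Fin (k + 1) =>
      σℓ q.1.1 q.1.2 q.2) :
    Measurable fun tc : T × ((Fin k → T) × (Fin (k + 1) → T) × Fin (k + 1)) =>
      rsmSurrogate k σℓ tc.1 tc.2 := by
  have h1 : Measurable fun tc : T × ((Fin k → T) × (Fin (k + 1) → T) × Fin (k + 1)) =>
      (tc.2.2.2.insertNth tc.1 tc.2.1 : Fin (k+1) → T) :=
    rsm_meas_insertNth.comp ((measurable_fst.prodMk (measurable_fst.comp measurable_snd)).prodMk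
      (measurable_snd.comp (measurable_snd.comp measurable_snd)))
  have h2 : Measurable fun tc : T × ((Fin k → T) × (Fin (k + 1) → T) × Fin (k + 1)) =>
      σℓ (tc.2.2.2.insertNth tc.1 tc.2.1 : Fin (k+1) → T) tc.2.2.1 tc.2.2.2 :=
    hσ.comp ((h1.prodMk ((measurable_fst.comp measurable_snd).comp measurable_snd)).prodMk
      ((measurable_snd.comp measurable_snd).comp measurable_snd))
  exact rsm_meas_eval.comp
    (((measurable_fst.comp measurable_snd).comp measurable_snd).prodMk h2)

lemma rsm_map_eval {α : Type*} [MeasurableSpace α] (μ : Measure α) [IsProbabilityMeasure μ]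
    {n : ℕ} (i : Fin (n + 1)) :
    Measure.map (fun s : Fin (n + 1) → α => s i) (Measure.pi fun _ => μ) = μ := by
  have h := (measurePreserving_piFinSuccAbove (fun _ : Fin (n + 1) => μ) i).map_eq
  have heq : (fun s : Fin (n + 1) → α => s i)
      = Prod.fst ∘ (MeasurableEquiv.piFinSuccAbove (fun _ : Fin (n + 1) => α) i) := rfl
  rw [heq, ← Measure.map_map measurable_fst (MeasurableEquiv.measurable _), h,
    Measure.map_fst_prod]
  simp

instance rsm_coins_prob (μ : Measure T) [IsProbabilityMeasure μ] (k : ℕ) :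
    IsProbabilityMeasure (rsmCoins μ k) := by
  unfold rsmCoins; infer_instance

end RSMAux
section RSMCore
variable {T : Type*} [MeasurableSpace T]

lemma rsm_sur_lintegral {k : ℕ} (μ : Measure T) [IsProbabilityMeasure μ]
    (σℓ : (Fin (k + 1) → T) → (Fin (k + 1) → T) → Equiv.Perm (Fin (k + 1)))
    (hσ : Measurable fun q : ((Fin (k + 1) → T) × (Fin (k + 1) → T)) × Fin (k + 1) =>
      σℓ q.1.1 q.1.2 q.2)
    (f : T → ℝ≥0∞) (hf : Measurable f) :
    ∫⁻ tc, f (rsmSurrogate k σℓ tc.1 tc.2) ∂(μ.prod (rsmCoins μ k)) = ∫⁻ x, f x ∂μ := by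
  classical
  set pik := Measure.pi fun _ : Fin k => μ with hpik
  set pim := Measure.pi fun _ : Fin (k + 1) => μ with hpim
  set unif := (PMF.uniformOfFintype (Fin (k + 1))).toMeasure with hunif
  have hF : Measurable fun tc : T × ((Fin k → T) × (Fin (k + 1) → T) × Fin (k + 1)) =>
      f (rsmSurrogate k σℓ tc.1 tc.2) := hf.comp (rsm_meas_sur σℓ hσ)
  -- re-associate the product measure
  have hassoc := measurePreserving_prodAssoc μ pik (pim.prod unif)
  have step0 : ∫⁻ tc, f (rsmSurrogate k σℓ tc.1 tc.2) ∂(μ.prod (rsmCoins μ k))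
      = ∫⁻ z, f (z.2.1 (σℓ (z.2.2.insertNth z.1.1 z.1.2 : Fin (k+1) → T) z.2.1 z.2.2))
          ∂((μ.prod pik).prod (pim.prod unif)) := by
    rw [show μ.prod (rsmCoins μ k) = μ.prod (pik.prod (pim.prod unif)) from rfl,
      ← hassoc.map_eq]
    rw [lintegral_map hF MeasurableEquiv.prodAssoc.measurable]
    rfl
  rw [step0]
  -- the integrand as a measurable function on the re-associated space
  have hG : Measurable fun z : (T × (Fin k → T)) × ((Fin (k + 1) → T) × Fin (k + 1)) =>
      f (z.2.1 (σℓ (z.2.2.insertNth z.1.1 z.1.2 : Fin (k+1) → T) z.2.1 z.2.2)) :=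
    hF.comp MeasurableEquiv.prodAssoc.measurable
  rw [lintegral_prod _ hG.aemeasurable]
  rw [lintegral_lintegral_swap hG.aemeasurable]
  -- inner integral via the insertNth measure-preservation
  have key : ∀ y : (Fin (k + 1) → T) × Fin (k + 1),
      (∫⁻ (w : T × (Fin k → T)),
        f (y.1 (σℓ (y.2.insertNth w.1 w.2 : Fin (k+1) → T) y.1 y.2)) ∂(μ.prod pik))
      = ∫⁻ r, f (y.1 (σℓ r y.1 y.2)) ∂pim := by
    intro y
    have mp := (measurePreserving_piFinSuccAbove (fun _ : Fin (k + 1) => μ) y.2).symm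
    have hg : Measurable fun r : Fin (k + 1) → T => f (y.1 (σℓ r y.1 y.2)) := by
      have hidx : Measurable fun r : Fin (k + 1) → T => σℓ r y.1 y.2 :=
        hσ.comp ((measurable_id.prodMk measurable_const).prodMk measurable_const)
      exact hf.comp ((measurable_of_countable y.1).comp hidx)
    have := mp.lintegral_comp hg
    exact this
  calc ∫⁻ y, ∫⁻ (w : T × (Fin k → T)),
        f (y.1 (σℓ (y.2.insertNth w.1 w.2 : Fin (k+1) → T) y.1 y.2)) ∂(μ.prod pik)
          ∂(pim.prod unif)
      = ∫⁻ y, ∫⁻ r, f (y.1 (σℓ r y.1 y.2)) ∂pim ∂(pim.prod unif) :=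
        lintegral_congr fun y => key y
    _ = ∫⁻ x, f x ∂μ := by
        have hH : Measurable fun y : (Fin (k + 1) → T) × Fin (k + 1) =>
            ∫⁻ r, f (y.1 (σℓ r y.1 y.2)) ∂pim := by
          apply Measurable.lintegral_prod_right'
            (f := fun z : ((Fin (k + 1) → T) × Fin (k + 1)) × (Fin (k + 1) → T) =>
              f (z.1.1 (σℓ z.2 z.1.1 z.1.2)))
          have hidx : Measurable fun z : ((Fin (k + 1) → T) × Fin (k + 1)) × (Fin (k + 1) → T) =>
              σℓ z.2 z.1.1 z.1.2 :=
            hσ.comp ((measurable_snd.prodMk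
              (measurable_fst.comp measurable_fst)).prodMk (measurable_snd.comp measurable_fst))
          exact hf.comp (rsm_meas_eval.comp ((measurable_fst.comp measurable_fst).prodMk hidx))
        rw [lintegral_prod _ hH.aemeasurable]
        have hmeasr : ∀ (s : Fin (k + 1) → T) (i : Fin (k + 1)),
            Measurable fun r : Fin (k + 1) → T => f (s (σℓ r s i)) := by
          intro s i
          have hidx : Measurable fun r : Fin (k + 1) → T => σℓ r s i :=
            hσ.comp ((measurable_id.prodMk measurable_const).prodMk measurable_const)
          exact hf.comp ((measurable_of_countable s).comp hidx)
        have inner : ∀ s : Fin (k + 1) → T,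
            (∫⁻ i, ∫⁻ r, f (s (σℓ r s i)) ∂pim ∂unif)
              = (∑ i', f (s i')) * (((k : ℕ) + 1 : ℕ) : ℝ≥0∞)⁻¹ := by
          intro s
          have hsing : ∀ i : Fin (k + 1), unif {i} = (((k : ℕ) + 1 : ℕ) : ℝ≥0∞)⁻¹ := by
            intro i
            rw [hunif, PMF.toMeasure_apply_singleton _ _ (measurableSet_singleton i),
              PMF.uniformOfFintype_apply]
            simp
          rw [lintegral_fintype]
          calc ∑ i, (∫⁻ r, f (s (σℓ r s i)) ∂pim) * unif {i}
              = (∑ i, ∫⁻ r, f (s (σℓ r s i)) ∂pim) * (((k : ℕ) + 1 : ℕ) : ℝ≥0∞)⁻¹ := by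
                rw [Finset.sum_mul]
                exact Finset.sum_congr rfl fun i _ => by rw [hsing i]
            _ = (∫⁻ r, ∑ i, f (s (σℓ r s i)) ∂pim) * _ := by
                rw [← lintegral_finset_sum _ fun i _ => hmeasr s i]
            _ = (∫⁻ (_r : Fin (k + 1) → T), ∑ i', f (s i') ∂pim) * _ := by
                congr 1
                exact lintegral_congr fun r => Equiv.sum_comp (σℓ r s) fun i' => f (s i')
            _ = (∑ i', f (s i')) * _ := by
                rw [lintegral_const, measure_univ, mul_one]
        rw [lintegral_congr inner]
        have hsum : Measurable fun s : Fin (k + 1) → T => ∑ i', f (s i') :=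
          Finset.measurable_sum _ fun i' _ => hf.comp (measurable_pi_apply i')
        rw [lintegral_mul_const _ hsum,
          lintegral_finset_sum (f := fun (i' : Fin (k + 1)) (s : Fin (k + 1) → T) => f (s i'))
            _ (fun i' _ => hf.comp (measurable_pi_apply i'))]
        have heval : ∀ i' : Fin (k + 1),
            (∫⁻ s, f (s i') ∂pim) = ∫⁻ x, f x ∂μ := by
          intro i'
          rw [show pim = Measure.pi fun _ => μ from rfl, ← lintegral_map hf (measurable_pi_apply i'), rsm_map_eval μ i']
        rw [Finset.sum_congr rfl fun i' _ => heval i', Finset.sum_const, Finset.card_univ,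
          Fintype.card_fin, nsmul_eq_mul, mul_comm, ← mul_assoc,
          ENNReal.inv_mul_cancel (by exact_mod_cast Nat.succ_ne_zero k) (by simp), one_mul]
end RSMCore

section RSMMap
variable {T : Type*} [MeasurableSpace T]

lemma rsm_sur_measurePreserving {k : ℕ} (μ : Measure T) [IsProbabilityMeasure μ]
    (σℓ : (Fin (k + 1) → T) → (Fin (k + 1) → T) → Equiv.Perm (Fin (k + 1)))
    (hσ : Measurable fun q : ((Fin (k + 1) → T) × (Fin (k + 1) → T)) × Fin (k + 1) =>
      σℓ q.1.1 q.1.2 q.2) :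
    MeasurePreserving (fun tc : T × ((Fin k → T) × (Fin (k + 1) → T) × Fin (k + 1)) =>
      rsmSurrogate k σℓ tc.1 tc.2) (μ.prod (rsmCoins μ k)) μ := by
  refine ⟨rsm_meas_sur σℓ hσ, ?_⟩
  ext s hs
  rw [Measure.map_apply (rsm_meas_sur σℓ hσ) hs]
  have h := rsm_sur_lintegral μ σℓ hσ (s.indicator 1) (measurable_one.indicator hs)
  have h2 : ∀ tc : T × ((Fin k → T) × (Fin (k + 1) → T) × Fin (k + 1)),
      s.indicator (1 : T → ℝ≥0∞) (rsmSurrogate k σℓ tc.1 tc.2)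
        = ((fun tc : T × ((Fin k → T) × (Fin (k + 1) → T) × Fin (k + 1)) =>
            rsmSurrogate k σℓ tc.1 tc.2) ⁻¹' s).indicator 1 tc := by
    intro tc
    by_cases hmem : rsmSurrogate k σℓ tc.1 tc.2 ∈ s <;>
      simp [Set.indicator_of_mem, Set.indicator_of_notMem, hmem, Set.mem_preimage]
  calc (μ.prod (rsmCoins μ k)) ((fun tc : T × ((Fin k → T) × (Fin (k + 1) → T) × Fin (k + 1)) =>
          rsmSurrogate k σℓ tc.1 tc.2) ⁻¹' s)
      = ∫⁻ tc, ((fun tc : T × ((Fin k → T) × (Fin (k + 1) → T) × Fin (k + 1)) =>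
          rsmSurrogate k σℓ tc.1 tc.2) ⁻¹' s).indicator 1 tc ∂(μ.prod (rsmCoins μ k)) :=
        (lintegral_indicator_one ((rsm_meas_sur σℓ hσ) hs)).symm
    _ = ∫⁻ tc, s.indicator (1 : T → ℝ≥0∞) (rsmSurrogate k σℓ tc.1 tc.2)
          ∂(μ.prod (rsmCoins μ k)) := lintegral_congr fun tc => (h2 tc).symm
    _ = ∫⁻ x, s.indicator 1 x ∂μ := h
    _ = μ s := lintegral_indicator_one hs

lemma rsm_psi_measurePreserving {nm1 k : ℕ} (μ : Measure T) [IsProbabilityMeasure μ]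
    (j : Fin (nm1 + 1))
    (σ : Fin (nm1 + 1) →
      (Fin (k + 1) → T) → (Fin (k + 1) → T) → Equiv.Perm (Fin (k + 1)))
    (hσmeas : ∀ ℓ : Fin (nm1 + 1), Measurable
      (fun q : ((Fin (k + 1) → T) × (Fin (k + 1) → T)) × Fin (k + 1) =>
        σ ℓ q.1.1 q.1.2 q.2)) :
    MeasurePreserving
      (fun q : (Fin nm1 → T) ×
          (Fin (nm1 + 1) → (Fin k → T) × (Fin (k + 1) → T) × Fin (k + 1)) =>
        ((q.2 j, fun a : Fin nm1 =>
            rsmSurrogate k (σ (j.succAbove a)) (q.1 a) (q.2 (j.succAbove a))) :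
          ((Fin k → T) × (Fin (k + 1) → T) × Fin (k + 1)) × (Fin nm1 → T)))
      ((Measure.pi fun _ : Fin nm1 => μ).prod
        (Measure.pi fun _ : Fin (nm1 + 1) => rsmCoins μ k))
      ((rsmCoins μ k).prod (Measure.pi fun _ : Fin nm1 => μ)) := by
  classical
  set Cs := (Fin k → T) × (Fin (k + 1) → T) × Fin (k + 1)
  set ν := rsmCoins μ k with hν
  set piT := Measure.pi fun _ : Fin nm1 => μ
  set piC' := Measure.pi fun _ : Fin nm1 => ν
  have step1 : MeasurePreserving
      (Prod.map (id : (Fin nm1 → T) → (Fin nm1 → T))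
        (MeasurableEquiv.piFinSuccAbove (fun _ : Fin (nm1 + 1) => Cs) j))
      (piT.prod (Measure.pi fun _ : Fin (nm1 + 1) => ν)) (piT.prod (ν.prod piC')) :=
    (MeasurePreserving.id piT).prod
      (measurePreserving_piFinSuccAbove (fun _ : Fin (nm1 + 1) => ν) j)
  have step2 : MeasurePreserving (Prod.swap : _ × _ → _)
      (piT.prod (ν.prod piC')) ((ν.prod piC').prod piT) := Measure.measurePreserving_swap
  have step3 := MeasureTheory.measurePreserving_prodAssoc ν piC' piT
  have step4 : MeasurePreserving
      (Prod.map (id : Cs → Cs) (Prod.swap : _ × _ → _))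
      (ν.prod (piC'.prod piT)) (ν.prod (piT.prod piC')) :=
    (MeasurePreserving.id ν).prod Measure.measurePreserving_swap
  have step5 : MeasurePreserving
      (Prod.map (id : Cs → Cs)
        (MeasurableEquiv.arrowProdEquivProdArrow T Cs (Fin nm1)).symm)
      (ν.prod (piT.prod piC')) (ν.prod (Measure.pi fun _ : Fin nm1 => μ.prod ν)) :=
    (MeasurePreserving.id ν).prod
      (measurePreserving_arrowProdEquivProdArrow T Cs (Fin nm1)
        (fun _ => μ) (fun _ => ν)).symm
  have step6 : MeasurePreserving
      (Prod.map (id : Cs → Cs)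
        (fun h : Fin nm1 → T × Cs => fun a =>
          rsmSurrogate k (σ (j.succAbove a)) (h a).1 (h a).2))
      (ν.prod (Measure.pi fun _ : Fin nm1 => μ.prod ν)) (ν.prod piT) :=
    (MeasurePreserving.id ν).prod
      (measurePreserving_pi (fun _ : Fin nm1 => μ.prod ν) (fun _ : Fin nm1 => μ)
        (fun a => rsm_sur_measurePreserving μ (σ (j.succAbove a)) (hσmeas (j.succAbove a))))
  have comp := step6.comp (step5.comp (step4.comp (step3.comp (step2.comp step1))))
  exact comp

end RSMMap

lemma rsm_integrable_of_bound {α : Type*} [MeasurableSpace α] (P : Measure α)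
    [IsFiniteMeasure P] {f : α → ℝ} (hf : AEStronglyMeasurable f P) {D : ℝ}
    (h : ∀ a, |f a| ≤ D) : Integrable f P :=
  ⟨hf, HasFiniteIntegral.of_bounded (C := D)
    (ae_of_all _ fun a => by simpa [Real.norm_eq_abs] using h a)⟩

theorem rsm_bic_aux
    {T O : Type*} [MeasurableSpace T] [MeasurableSpace O]
    (μ : Measure T) [IsProbabilityMeasure μ]
    (nm1 : ℕ) (j : Fin (nm1 + 1)) (k : ℕ)
    (A : (Fin (nm1 + 1) → T) → O) (hA : Measurable A)
    (v : T → O → ℝ) (hv : Measurable fun q : T × O => v q.1 q.2)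
    (C : ℝ) (hC : ∀ (t : T) (o : O), |v t o| ≤ C)
    (W : Fin (nm1 + 1) → T → T → ℝ)
    (hW : ∀ (ℓ : Fin (nm1 + 1)) (r s : T),
      W ℓ r s = ∫ x, v r (A (ℓ.insertNth s x)) ∂(Measure.pi fun _ : Fin nm1 => μ))
    (σ : Fin (nm1 + 1) →
      (Fin (k + 1) → T) → (Fin (k + 1) → T) → Equiv.Perm (Fin (k + 1)))
    (p : Fin (nm1 + 1) →
      (Fin (k + 1) → T) → (Fin (k + 1) → T) → Fin (k + 1) → ℝ)
    (hσmeas : ∀ ℓ : Fin (nm1 + 1), Measurable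
      (fun q : ((Fin (k + 1) → T) × (Fin (k + 1) → T)) × Fin (k + 1) =>
        σ ℓ q.1.1 q.1.2 q.2))
    (hpmeas : ∀ ℓ : Fin (nm1 + 1), Measurable
      (fun q : ((Fin (k + 1) → T) × (Fin (k + 1) → T)) × Fin (k + 1) =>
        p ℓ q.1.1 q.1.2 q.2))
    (hσopt : ∀ (ℓ : Fin (nm1 + 1)) (r s : Fin (k + 1) → T)
      (τ : Equiv.Perm (Fin (k + 1))),
      ∑ a, W ℓ (r a) (s (τ a)) ≤ ∑ a, W ℓ (r a) (s (σ ℓ r s a)))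
    (hpay : ∀ (ℓ : Fin (nm1 + 1)) (r s : Fin (k + 1) → T) (a : Fin (k + 1)),
      p ℓ r s a =
        (⨆ τ : Equiv.Perm (Fin (k + 1)),
          ∑ a' ∈ univ.erase a, W ℓ (r a') (s (τ a')))
          - ∑ a' ∈ univ.erase a, W ℓ (r a') (s (σ ℓ r s a'))) :
    ∀ t b : T,
      (∫ q : (Fin nm1 → T) ×
          (Fin (nm1 + 1) → (Fin k → T) × (Fin (k + 1) → T) × Fin (k + 1)),
          (v t (A (j.insertNth (rsmSurrogate k (σ j) t (q.2 j))
              (fun a : Fin nm1 =>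
                rsmSurrogate k (σ (j.succAbove a)) (q.1 a) (q.2 (j.succAbove a)))))
            - rsmPayment k (p j) t (q.2 j))
        ∂((Measure.pi fun _ : Fin nm1 => μ).prod
          (Measure.pi fun _ : Fin (nm1 + 1) => rsmCoins μ k)))
      ≥
      (∫ q : (Fin nm1 → T) ×
          (Fin (nm1 + 1) → (Fin k → T) × (Fin (k + 1) → T) × Fin (k + 1)),
          (v t (A (j.insertNth (rsmSurrogate k (σ j) b (q.2 j))
              (fun a : Fin nm1 =>
                rsmSurrogate k (σ (j.succAbove a)) (q.1 a) (q.2 (j.succAbove a)))))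
            - rsmPayment k (p j) b (q.2 j))
        ∂((Measure.pi fun _ : Fin nm1 => μ).prod
          (Measure.pi fun _ : Fin (nm1 + 1) => rsmCoins μ k))) := by
  intro t b
  classical
  have hC0 : (0 : ℝ) ≤ C := le_trans (abs_nonneg _) (hC t (A fun _ => t))
  set piT := (Measure.pi fun _ : Fin nm1 => μ) with hpiT
  set ν := rsmCoins μ k with hν
  set P := piT.prod (Measure.pi fun _ : Fin (nm1 + 1) => ν) with hP
  -- bounds on W
  have hWb : ∀ (ℓ : Fin (nm1 + 1)) (r s' : T), |W ℓ r s'| ≤ C := by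
    intro ℓ r s'
    rw [hW]
    have := norm_integral_le_of_norm_le_const (μ := piT)
      (f := fun x => v r (A (ℓ.insertNth s' x))) (C := C)
      (ae_of_all _ fun x => by simpa [Real.norm_eq_abs] using hC r _)
    simpa [Real.norm_eq_abs, measure_univ] using this
  set B := ((k : ℝ) + 1) * C with hB
  have hsumB : ∀ (r s : Fin (k + 1) → T) (τ : Equiv.Perm (Fin (k + 1))) (a : Fin (k + 1)),
      |∑ a' ∈ univ.erase a, W j (r a') (s (τ a'))| ≤ B := by
    intro r s τ a
    calc |∑ a' ∈ univ.erase a, W j (r a') (s (τ a'))|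
        ≤ ∑ a' ∈ univ.erase a, |W j (r a') (s (τ a'))| := Finset.abs_sum_le_sum_abs _ _
      _ ≤ ∑ _a' ∈ univ.erase a, C := Finset.sum_le_sum fun a' _ => hWb _ _ _
      _ = ((univ.erase a).card : ℝ) * C := by rw [Finset.sum_const, nsmul_eq_mul]
      _ ≤ B := by
          rw [hB]
          have h1 : ((univ.erase a).card : ℝ) ≤ (k : ℝ) + 1 := by
            have h2 : (univ.erase a).card ≤ k + 1 :=
              le_trans (Finset.card_erase_le) (by simp)
            exact_mod_cast h2
          exact mul_le_mul_of_nonneg_right h1 hC0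
  have hsupB : ∀ (r s : Fin (k + 1) → T) (a : Fin (k + 1)),
      |⨆ τ : Equiv.Perm (Fin (k + 1)), ∑ a' ∈ univ.erase a, W j (r a') (s (τ a'))| ≤ B := by
    intro r s a
    rw [abs_le]
    constructor
    · have h1 : ∑ a' ∈ univ.erase a, W j (r a') (s ((1 : Equiv.Perm (Fin (k + 1))) a'))
          ≤ ⨆ τ : Equiv.Perm (Fin (k + 1)), ∑ a' ∈ univ.erase a, W j (r a') (s (τ a')) :=
        le_ciSup (f := fun τ : Equiv.Perm (Fin (k + 1)) =>
          ∑ a' ∈ univ.erase a, W j (r a') (s (τ a')))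
          (Set.Finite.bddAbove (Set.finite_range _)) 1
      have h2 := (abs_le.1 (hsumB r s 1 a)).1
      linarith
    · exact ciSup_le fun τ => (abs_le.1 (hsumB r s τ a)).2
  have hpB : ∀ (r s : Fin (k + 1) → T) (a : Fin (k + 1)), |p j r s a| ≤ 2 * B := by
    intro r s a
    rw [hpay]
    have h1 := hsupB r s a
    have h2 := hsumB r s (σ j r s) a
    have h4 := abs_sub
      (⨆ τ : Equiv.Perm (Fin (k + 1)), ∑ a' ∈ univ.erase a, W j (r a') (s (τ a')))
      (∑ a' ∈ univ.erase a, W j (r a') (s (σ j r s a')))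
    linarith
  -- measurability
  have hvt : Measurable (v t) := hv.comp (measurable_const.prodMk measurable_id)
  have hWt : Measurable (W j t) := by
    have heq : W j t = fun s' => ∫ x, v t (A (j.insertNth s' x)) ∂piT :=
      funext fun s' => hW j t s'
    rw [heq]
    have hpair : Measurable fun q : T × (Fin nm1 → T) => v t (A (j.insertNth q.1 q.2)) :=
      hvt.comp (hA.comp (rsm_meas_insertNth_fixed j))
    exact hpair.stronglyMeasurable.integral_prod_right'.measurable
  have hSur : ∀ X : T,
      Measurable fun c : (Fin k → T) × (Fin (k + 1) → T) × Fin (k + 1) =>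
        rsmSurrogate k (σ j) X c :=
    fun X => (rsm_meas_sur (σ j) (hσmeas j)).comp (measurable_const.prodMk measurable_id)
  have hPaym : ∀ X : T,
      Measurable fun c : (Fin k → T) × (Fin (k + 1) → T) × Fin (k + 1) =>
        rsmPayment k (p j) X c := by
    intro X
    have h1 : Measurable fun c : (Fin k → T) × (Fin (k + 1) → T) × Fin (k + 1) =>
        (c.2.2.insertNth X c.1 : Fin (k + 1) → T) :=
      rsm_meas_insertNth.comp ((measurable_const.prodMk measurable_fst).prodMk
        (measurable_snd.comp measurable_snd))
    exact (hpmeas j).comp ((h1.prodMk (measurable_fst.comp measurable_snd)).prodMk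
      (measurable_snd.comp measurable_snd))
  have hPayB : ∀ (X : T) (c : (Fin k → T) × (Fin (k + 1) → T) × Fin (k + 1)),
      |rsmPayment k (p j) X c| ≤ 2 * B := fun X c => hpB _ _ _
  -- the main reduction: the expected utility equals an expectation over a single coin
  have claim : ∀ X : T,
      (∫ q : (Fin nm1 → T) ×
          (Fin (nm1 + 1) → (Fin k → T) × (Fin (k + 1) → T) × Fin (k + 1)),
          (v t (A (j.insertNth (rsmSurrogate k (σ j) X (q.2 j))
              (fun a : Fin nm1 =>
                rsmSurrogate k (σ (j.succAbove a)) (q.1 a) (q.2 (j.succAbove a)))))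
            - rsmPayment k (p j) X (q.2 j)) ∂P)
      = ∫ c, (W j t (rsmSurrogate k (σ j) X c) - rsmPayment k (p j) X c) ∂ν := by
    intro X
    have mp := rsm_psi_measurePreserving μ j σ hσmeas
    have hG : Measurable fun z : ((Fin k → T) × (Fin (k + 1) → T) × Fin (k + 1)) ×
        (Fin nm1 → T) =>
        v t (A (j.insertNth (rsmSurrogate k (σ j) X z.1) z.2)) - rsmPayment k (p j) X z.1 :=
      (hvt.comp (hA.comp ((rsm_meas_insertNth_fixed j).comp
        (((hSur X).comp measurable_fst).prodMk measurable_snd)))).sub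
        ((hPaym X).comp measurable_fst)
    have hGint : Integrable
        (fun z : ((Fin k → T) × (Fin (k + 1) → T) × Fin (k + 1)) × (Fin nm1 → T) =>
          v t (A (j.insertNth (rsmSurrogate k (σ j) X z.1) z.2)) - rsmPayment k (p j) X z.1)
        (ν.prod piT) := by
      refine rsm_integrable_of_bound _ hG.aestronglyMeasurable (D := C + 2 * B) fun z => ?_
      have h1 := hC t (A (j.insertNth (rsmSurrogate k (σ j) X z.1) z.2))
      have h2 := hPayB X z.1
      have h3 := abs_sub (v t (A (j.insertNth (rsmSurrogate k (σ j) X z.1) z.2)))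
        (rsmPayment k (p j) X z.1)
      linarith
    have h1 : (∫ z, (v t (A (j.insertNth (rsmSurrogate k (σ j) X z.1) z.2))
          - rsmPayment k (p j) X z.1) ∂(ν.prod piT))
        = ∫ q : (Fin nm1 → T) ×
            (Fin (nm1 + 1) → (Fin k → T) × (Fin (k + 1) → T) × Fin (k + 1)),
          (v t (A (j.insertNth (rsmSurrogate k (σ j) X (q.2 j))
              (fun a : Fin nm1 =>
                rsmSurrogate k (σ (j.succAbove a)) (q.1 a) (q.2 (j.succAbove a)))))
            - rsmPayment k (p j) X (q.2 j)) ∂P := by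
      rw [← mp.map_eq]
      exact integral_map mp.measurable.aemeasurable hG.aestronglyMeasurable
    rw [← h1, integral_prod _ hGint]
    refine integral_congr_ae (ae_of_all _ fun c => ?_)
    show (∫ x, (v t (A (j.insertNth (rsmSurrogate k (σ j) X c) x))
          - rsmPayment k (p j) X c) ∂piT)
        = W j t (rsmSurrogate k (σ j) X c) - rsmPayment k (p j) X c
    have hvalm : Measurable fun x : Fin nm1 → T =>
        v t (A (j.insertNth (rsmSurrogate k (σ j) X c) x)) :=
      hvt.comp (hA.comp ((rsm_meas_insertNth_fixed j).comp
        (measurable_const.prodMk measurable_id)))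
    have hval : Integrable (fun x : Fin nm1 → T =>
        v t (A (j.insertNth (rsmSurrogate k (σ j) X c) x))) piT :=
      rsm_integrable_of_bound _ hvalm.aestronglyMeasurable (D := C) fun x => hC t _
    rw [integral_sub hval (integrable_const _), integral_const, hW j t]
    simp [measure_univ]
  rw [ge_iff_le, claim t, claim b]
  have intX : ∀ X : T, Integrable
      (fun c : (Fin k → T) × (Fin (k + 1) → T) × Fin (k + 1) =>
        W j t (rsmSurrogate k (σ j) X c) - rsmPayment k (p j) X c) ν := by
    intro X
    refine rsm_integrable_of_bound _
      ((hWt.comp (hSur X)).sub (hPaym X)).aestronglyMeasurable (D := C + 2 * B) fun c => ?_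
    have h1 := hWb j t (rsmSurrogate k (σ j) X c)
    have h2 := hPayB X c
    have h3 := abs_sub (W j t (rsmSurrogate k (σ j) X c)) (rsmPayment k (p j) X c)
    linarith
  refine integral_mono (intX b) (intX t) fun c => ?_
  -- pointwise VCG incentive compatibility
  obtain ⟨r', s, i⟩ := c
  simp only [rsmSurrogate, rsmPayment]
  set rb := (i.insertNth b r' : Fin (k + 1) → T) with hrb
  set rt := (i.insertNth t r' : Fin (k + 1) → T) with hrt
  have hsame : ∀ a ∈ univ.erase i, rb a = rt a := by
    intro a ha
    have hne : a ≠ i := Finset.ne_of_mem_erase ha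
    obtain ⟨a0, rfl⟩ := Fin.exists_succAbove_eq hne
    simp [hrb, hrt]
  have ht_i : rt i = t := by simp [hrt]
  rw [hpay j rb s i, hpay j rt s i]
  have hsup : (⨆ τ : Equiv.Perm (Fin (k + 1)), ∑ a' ∈ univ.erase i, W j (rb a') (s (τ a')))
      = ⨆ τ : Equiv.Perm (Fin (k + 1)), ∑ a' ∈ univ.erase i, W j (rt a') (s (τ a')) := by
    exact iSup_congr fun τ => Finset.sum_congr rfl fun a' ha' => by rw [hsame a' ha']
  have hSb : ∑ a' ∈ univ.erase i, W j (rb a') (s (σ j rb s a'))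
      = ∑ a' ∈ univ.erase i, W j (rt a') (s (σ j rb s a')) :=
    Finset.sum_congr rfl fun a' ha' => by rw [hsame a' ha']
  have hb2 : W j (rt i) (s (σ j rb s i)) + ∑ a' ∈ univ.erase i, W j (rt a') (s (σ j rb s a'))
      = ∑ a, W j (rt a) (s (σ j rb s a)) :=
    Finset.add_sum_erase univ (fun a => W j (rt a) (s (σ j rb s a))) (Finset.mem_univ i)
  have ht2 : W j (rt i) (s (σ j rt s i)) + ∑ a' ∈ univ.erase i, W j (rt a') (s (σ j rt s a'))
      = ∑ a, W j (rt a) (s (σ j rt s a)) :=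
    Finset.add_sum_erase univ (fun a => W j (rt a) (s (σ j rt s a))) (Finset.mem_univ i)
  have hopt := hσopt j rt s (σ j rb s)
  have e1 : W j t (s (σ j rb s i)) = W j (rt i) (s (σ j rb s i)) := by rw [ht_i]
  have e2 : W j t (s (σ j rt s i)) = W j (rt i) (s (σ j rt s i)) := by rw [ht_i]
  linarith [hsup.ge, hsup.le]


/-- The Replica-Surrogate-Matching mechanism is Bayesian incentive compatible
(Hartline–Kleinberg–Malekian, idealized model): with `n = nm1 + 1` agents,
`m = k + 1` replicas, a measurable algorithm `A`, a bounded jointly measurable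
valuation `v`, expected weights `W ℓ r s = 𝔼_{x ~ μ^{n-1}} v r (A (ℓ.insertNth s x))`,
and per-agent VCG matching selectors `(σ ℓ, p ℓ)` for `W ℓ` on markets of size `m`,
agent `j`'s expected utility — over the other agents' i.i.d. `μ`-types and independent
RSM coins for every agent, with every other agent reporting truthfully, the algorithm
applied to the surrogate profile and agent `j` charged its VCG payment — is maximized
by truthful reporting: `U t t ≥ U t b` for all `t b : T`. -/
theorem rsm_bayesian_incentive_compatible
    {T O : Type*} [MeasurableSpace T] [MeasurableSpace O]
    (μ : Measure T) [IsProbabilityMeasure μ]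
    (nm1 : ℕ) (j : Fin (nm1 + 1)) (k : ℕ)
    (A : (Fin (nm1 + 1) → T) → O) (hA : Measurable A)
    (v : T → O → ℝ) (hv : Measurable fun q : T × O => v q.1 q.2)
    (C : ℝ) (hC : ∀ (t : T) (o : O), |v t o| ≤ C)
    (W : Fin (nm1 + 1) → T → T → ℝ)
    (hW : ∀ (ℓ : Fin (nm1 + 1)) (r s : T),
      W ℓ r s = ∫ x, v r (A (ℓ.insertNth s x)) ∂(Measure.pi fun _ : Fin nm1 => μ))
    (σ : Fin (nm1 + 1) →
      (Fin (k + 1) → T) → (Fin (k + 1) → T) → Equiv.Perm (Fin (k + 1)))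
    (p : Fin (nm1 + 1) →
      (Fin (k + 1) → T) → (Fin (k + 1) → T) → Fin (k + 1) → ℝ)
    (hσmeas : ∀ ℓ : Fin (nm1 + 1), Measurable
      (fun q : ((Fin (k + 1) → T) × (Fin (k + 1) → T)) × Fin (k + 1) =>
        σ ℓ q.1.1 q.1.2 q.2))
    (hpmeas : ∀ ℓ : Fin (nm1 + 1), Measurable
      (fun q : ((Fin (k + 1) → T) × (Fin (k + 1) → T)) × Fin (k + 1) =>
        p ℓ q.1.1 q.1.2 q.2))
    (hσopt : ∀ (ℓ : Fin (nm1 + 1)) (r s : Fin (k + 1) → T)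
      (τ : Equiv.Perm (Fin (k + 1))),
      ∑ a, W ℓ (r a) (s (τ a)) ≤ ∑ a, W ℓ (r a) (s (σ ℓ r s a)))
    (hpay : ∀ (ℓ : Fin (nm1 + 1)) (r s : Fin (k + 1) → T) (a : Fin (k + 1)),
      p ℓ r s a =
        (⨆ τ : Equiv.Perm (Fin (k + 1)),
          ∑ a' ∈ univ.erase a, W ℓ (r a') (s (τ a')))
          - ∑ a' ∈ univ.erase a, W ℓ (r a') (s (σ ℓ r s a'))) :
    ∀ t b : T,
      (∫ q : (Fin nm1 → T) ×
          (Fin (nm1 + 1) → (Fin k → T) × (Fin (k + 1) → T) × Fin (k + 1)),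
          (v t (A (j.insertNth (rsmSurrogate k (σ j) t (q.2 j))
              (fun a : Fin nm1 =>
                rsmSurrogate k (σ (j.succAbove a)) (q.1 a) (q.2 (j.succAbove a)))))
            - rsmPayment k (p j) t (q.2 j))
        ∂((Measure.pi fun _ : Fin nm1 => μ).prod
          (Measure.pi fun _ : Fin (nm1 + 1) => rsmCoins μ k)))
      ≥
      (∫ q : (Fin nm1 → T) ×
          (Fin (nm1 + 1) → (Fin k → T) × (Fin (k + 1) → T) × Fin (k + 1)),
          (v t (A (j.insertNth (rsmSurrogate k (σ j) b (q.2 j))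
              (fun a : Fin nm1 =>
                rsmSurrogate k (σ (j.succAbove a)) (q.1 a) (q.2 (j.succAbove a)))))
            - rsmPayment k (p j) b (q.2 j))
        ∂((Measure.pi fun _ : Fin nm1 => μ).prod
          (Measure.pi fun _ : Fin (nm1 + 1) => rsmCoins μ k))) :=
  rsm_bic_aux μ nm1 j k A hA v hv C hC W hW σ p hσmeas hpmeas hσopt hpay
end
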